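/- Let \mathfrak{g}_1 and \mathfrak{g}_2 be Lie algebras acting canonically on a symplectic manifold (M,\omega), admitting infinitesimally equivariant momentum maps J_1 and J_2, with (\mathfrak{g}_2)_M \subseteq \ker TJ_1. If in addition the Lie algebra action of \mathfrak{g}_2 is transitive on level sets of J_1 and the action of \mathfrak{g}_1 is transitive on level sets of J_2, i.e. (\mathfrak{g}_2)_M = \ker TJ_1 and (\mathfrak{g}_1)_M = \ker TJ_2, then the pair (J_1, J_2) is a dual pair: (\ker TJ_1)^\omega = \ker TJ_2 and (\ker TJ_2)^\omega = \ker TJ_1. -/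
import Mathlib


/-!
STATEMENT 1 (Proposition 2.1, dual-pair part).

Same abstract model as for the weak dual pair result: points form a type `M`,
tangent spaces are identified with a fixed real vector space `V`, the symplectic
form `ω` is a point-dependent alternating weakly nondegenerate bilinear form and
the differential `d` of functions is given as data.  `a1, a2` are the
infinitesimal generator maps of canonical Lie algebra actions of `g1, g2`, with
infinitesimally equivariant momentum maps `J1, J2`; `kerTJ1 m`, `kerTJ2 m` are
the kernels of the tangent maps of the momentum maps.

Hypotheses: `(g2)_M ⊆ ker TJ1` (infinitesimal invariance), and the transitivity
conditions `(g2)_M = ker TJ1` and `(g1)_M = ker TJ2`.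

Conclusion: `(J1, J2)` is a dual pair, i.e. `(ker TJ1)^ω = ker TJ2` and
`(ker TJ2)^ω = ker TJ1`.
-/

/-- The symplectic orthogonal (as a set) of a set `A` of tangent vectors,
relative to the bilinear form `ω`. -/
def sympOrth {V : Type*} (ω : V → V → ℝ) (A : Set V) : Set V :=
  {v | ∀ w ∈ A, ω v w = 0}

theorem statement1
    (M : Type*) (V : Type*) [AddCommGroup V] [Module ℝ V]
    -- the symplectic form, alternating and (weakly) nondegenerate
    (ω : M → V →ₗ[ℝ] V →ₗ[ℝ] ℝ)
    (halt : ∀ m v, ω m v v = 0)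
    (hnondeg : ∀ m v, (∀ w, ω m v w = 0) → v = 0)
    -- exterior differential of functions on M
    (d : (M → ℝ) → M → V →ₗ[ℝ] ℝ)
    -- the Lie algebras g1, g2 and their infinitesimal actions on M
    (g1 : Type*) [LieRing g1] [LieAlgebra ℝ g1]
    (g2 : Type*) [LieRing g2] [LieAlgebra ℝ g2]
    (a1 : g1 → M → V) (a2 : g2 → M → V)
    -- the momentum maps : d⟨J,ξ⟩ = i_{ξ_M}ω
    (J1 : M → g1 → ℝ) (J2 : M → g2 → ℝ)
    (hJ1 : ∀ (ξ : g1) (m : M), d (fun m' => J1 m' ξ) m = ω m (a1 ξ m))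
    (hJ2 : ∀ (η : g2) (m : M), d (fun m' => J2 m' η) m = ω m (a2 η m))
    -- infinitesimal equivariance : ⟨J,[ξ,η]⟩ = ω(ξ_M,η_M)
    (heq1 : ∀ (ξ ξ' : g1) (m : M), J1 m ⁅ξ, ξ'⁆ = ω m (a1 ξ m) (a1 ξ' m))
    (heq2 : ∀ (η η' : g2) (m : M), J2 m ⁅η, η'⁆ = ω m (a2 η m) (a2 η' m))
    -- kernels of the tangent maps of the momentum maps
    (kerTJ1 kerTJ2 : M → Set V)
    (hker1 : ∀ m, kerTJ1 m = {v | ∀ ξ : g1, d (fun m' => J1 m' ξ) m v = 0})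
    (hker2 : ∀ m, kerTJ2 m = {v | ∀ η : g2, d (fun m' => J2 m' η) m v = 0})
    -- infinitesimal invariance : (g2)_M ⊆ ker TJ1
    (hinv : ∀ m (η : g2), a2 η m ∈ kerTJ1 m)
    -- transitivity of the g2 action on level sets of J1 : (g2)_M = ker TJ1
    (htrans2 : ∀ m, kerTJ1 m = {v | ∃ η : g2, a2 η m = v})
    -- transitivity of the g1 action on level sets of J2 : (g1)_M = ker TJ2
    (htrans1 : ∀ m, kerTJ2 m = {v | ∃ ξ : g1, a1 ξ m = v}) :
    -- (J1, J2) is a dual pair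
    ∀ m, sympOrth (fun v w => ω m v w) (kerTJ1 m) = kerTJ2 m ∧
      sympOrth (fun v w => ω m v w) (kerTJ2 m) = kerTJ1 m := by
  intro m
  have hskew : ∀ v w : V, ω m v w = - ω m w v := by
    intro v w
    have h := halt m (v + w)
    simp only [map_add, LinearMap.add_apply, halt m v, halt m w] at h
    linarith
  constructor
  · ext v
    simp only [sympOrth, htrans2 m, hker2 m, Set.mem_setOf_eq]
    constructor
    · intro h η
      rw [hJ2 η m]
      rw [hskew]
      have := h (a2 η m) ⟨η, rfl⟩
      linarith
    · rintro h w ⟨η, rfl⟩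
      have := h η
      rw [hJ2 η m] at this
      rw [hskew]
      linarith
  · ext v
    simp only [sympOrth, htrans1 m, hker1 m, Set.mem_setOf_eq]
    constructor
    · intro h ξ
      rw [hJ1 ξ m]
      rw [hskew]
      have := h (a1 ξ m) ⟨ξ, rfl⟩
      linarith
    · rintro h w ⟨ξ, rfl⟩
      have := h ξ
      rw [hJ1 ξ m] at this
      rw [hskew]
      linarith
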